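/- Let δ > 0 and let k ≥ 0 be an integer. Then ∑_{n=0}^∞ [(-δ)^{↑(n+k)} · (-δ)^{↑n}] / [(n+k)! · n!] = (-δ)^{↑k} · Γ(1+2δ) / (Γ(1+δ)·Γ(1+δ+k)). -/

import Mathlib

open Finset Real

/-- Rising factorial (Pochhammer symbol): `x^{↑k} = x(x+1)⋯(x+k-1)`. -/
noncomputable def risingFac (x : ℝ) (k : ℕ) : ℝ := ∏ j ∈ Finset.range k, (x + j)

open Filter Topology

lemma risingFac_zero (x : ℝ) : risingFac x 0 = 1 := by simp [risingFac]

lemma risingFac_succ (x : ℝ) (n : ℕ) : risingFac x (n + 1) = risingFac x n * (x + n) := by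
  simp [risingFac, Finset.prod_range_succ]

lemma risingFac_succ' (x : ℝ) (n : ℕ) : risingFac x (n + 1) = x * risingFac (x + 1) n := by
  rw [risingFac, risingFac, Finset.prod_range_succ', mul_comm]
  push_cast
  simp [add_assoc, add_comm (1:ℝ)]

lemma risingFac_pos {x : ℝ} (hx : 0 < x) (n : ℕ) : 0 < risingFac x n := by
  refine Finset.prod_pos fun j _ => by positivity

lemma risingFac_add (x : ℝ) (k n : ℕ) :
    risingFac x (k + n) = risingFac x k * risingFac (x + k) n := by
  induction n with
  | zero => simp [risingFac_zero]
  | succ n ih =>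
      rw [← add_assoc, risingFac_succ, ih, risingFac_succ, mul_assoc]
      push_cast; ring_nf

lemma factorial_cast_eq (k n : ℕ) :
    ((Nat.factorial (n + k) : ℝ)) = (Nat.factorial k : ℝ) * risingFac ((k : ℝ) + 1) n := by
  induction n with
  | zero => simp [risingFac_zero]
  | succ n ih =>
      have : n + 1 + k = (n + k) + 1 := by omega
      rw [this, Nat.factorial_succ, risingFac_succ]
      push_cast [ih]; ring

lemma risingFac_mono {x y : ℝ} (hx : 0 < x) (hxy : x ≤ y) (n : ℕ) :
    risingFac x n ≤ risingFac y n := by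
  refine Finset.prod_le_prod (fun j _ => by positivity) (fun j _ => by linarith)

noncomputable def hT (δ : ℝ) (k : ℕ) (c : ℝ) (n : ℕ) : ℝ :=
  risingFac ((k : ℝ) - δ) n * risingFac (-δ) n / (risingFac c n * (Nat.factorial n : ℝ))

lemma coeff_decay {δ : ℝ} (hδ : 0 < δ) :
    ∃ C : ℝ, 0 ≤ C ∧ ∃ N : ℕ, 1 ≤ N ∧ δ < N ∧ ∀ n, N ≤ n →
      |risingFac (-δ) n| ≤ C * (n : ℝ) ^ (-(1 + δ)) * (Nat.factorial n : ℝ) := by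
  obtain ⟨N, hN1, hNδ⟩ : ∃ N : ℕ, 1 ≤ N ∧ δ < N :=
    ⟨⌈δ⌉₊ + 1, by omega, by
      have := Nat.le_ceil δ
      push_cast; linarith⟩
  set C : ℝ := |risingFac (-δ) N| / (Nat.factorial N : ℝ) * (N : ℝ) ^ (1 + δ) with hC
  have hCpos : 0 ≤ C := by positivity
  refine ⟨C, hCpos, N, hN1, hNδ, ?_⟩
  intro n hn
  obtain ⟨m, rfl⟩ := Nat.exists_eq_add_of_le hn
  clear hn
  induction m with
  | zero =>
      have hNpos : (0:ℝ) < (N:ℝ) := by positivity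
      have h1 : (N:ℝ) ^ (1 + δ) * (N:ℝ) ^ (-(1 + δ)) = 1 := by
        rw [← Real.rpow_add hNpos, show (1 + δ) + -(1 + δ) = (0:ℝ) by ring, Real.rpow_zero]
      have hfac : (0:ℝ) < (Nat.factorial N : ℝ) := by positivity
      have e : C * (N:ℝ)^(-(1+δ)) * (Nat.factorial N : ℝ)
          = |risingFac (-δ) N| * ((N:ℝ)^(1+δ) * (N:ℝ)^(-(1+δ))) := by
        rw [hC]; field_simp
      rw [add_zero, e, h1, mul_one]
  | succ m ih =>
      have hm' : (1:ℝ) ≤ ((N:ℝ) + m) := by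
        have : (1:ℝ) ≤ (N:ℝ) := by exact_mod_cast hN1
        have : (0:ℝ) ≤ (m:ℝ) := by positivity
        linarith
      set x : ℝ := (N:ℝ) + m with hx
      have hx0 : (0:ℝ) < x := by linarith
      have hx1 : (0:ℝ) < x + 1 := by linarith
      have hxδ : 0 < x - δ := by
        have : (m:ℝ) ≥ 0 := by positivity
        rw [hx]; linarith
      -- Bernoulli step
      have hb := one_add_mul_self_le_rpow_one_add
        (s := -(1 / (x + 1))) (p := 1 + δ)
        (by rw [neg_le, neg_neg]; rw [div_le_one hx1]; linarith) (by linarith)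
      have hb1 : (x - δ) / (x + 1) ≤ (x / (x + 1)) ^ (1 + δ) := by
        have e1 : 1 + -(1 / (x + 1)) = x / (x + 1) := by field_simp; ring
        have e2 : 1 + (1 + δ) * -(1 / (x + 1)) = (x - δ) / (x + 1) := by field_simp; ring
        rwa [e1, e2] at hb
      have hb2 : x ^ (-(1+δ)) * (x - δ) ≤ (x + 1) ^ (-(1+δ)) * (x + 1) := by
        have hdiv : (x / (x + 1)) ^ (1 + δ) = x ^ (1+δ) * (x+1) ^ (-(1+δ)) := by
          rw [Real.div_rpow hx0.le hx1.le, Real.rpow_neg hx1.le, div_eq_mul_inv]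
        have h2 : x - δ ≤ x ^ (1+δ) * (x+1) ^ (-(1+δ)) * (x + 1) := by
          rw [div_le_iff₀ hx1] at hb1
          calc x - δ ≤ (x / (x+1)) ^ (1+δ) * (x+1) := hb1
            _ = x ^ (1+δ) * (x+1) ^ (-(1+δ)) * (x+1) := by rw [hdiv]
        have h3 : x ^ (-(1+δ)) * (x ^ (1+δ) * (x+1) ^ (-(1+δ)) * (x + 1))
            = (x + 1) ^ (-(1+δ)) * (x + 1) := by
          rw [← mul_assoc, ← mul_assoc, ← Real.rpow_add hx0,
            show -(1 + δ) + (1 + δ) = (0:ℝ) by ring, Real.rpow_zero, one_mul]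
        calc x ^ (-(1+δ)) * (x - δ) ≤ x ^ (-(1+δ)) * (x ^ (1+δ) * (x+1) ^ (-(1+δ)) * (x + 1)) := by
              apply mul_le_mul_of_nonneg_left h2 (by positivity)
          _ = (x + 1) ^ (-(1+δ)) * (x + 1) := h3
      -- main step
      have e3 : N + (m + 1) = (N + m) + 1 := by omega
      rw [e3, risingFac_succ, abs_mul, Nat.factorial_succ]
      have habs : |(-δ + ((N + m : ℕ) : ℝ))| = x - δ := by
        rw [abs_of_nonneg (by push_cast; linarith)]
        push_cast; ring
      rw [habs]
      have hcast1 : (((N + m) + 1 : ℕ) : ℝ) = x + 1 := by push_cast; ring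
      rw [hcast1]
      have hfacpos : (0:ℝ) ≤ ((N+m).factorial : ℝ) := by positivity
      calc |risingFac (-δ) (N + m)| * (x - δ)
          ≤ (C * ((N+m : ℕ):ℝ) ^ (-(1+δ)) * ((N+m).factorial : ℝ)) * (x - δ) := by
            apply mul_le_mul_of_nonneg_right ih hxδ.le
        _ = C * ((N+m).factorial : ℝ) * (x ^ (-(1+δ)) * (x - δ)) := by
            rw [hx]; push_cast; ring
        _ ≤ C * ((N+m).factorial : ℝ) * ((x+1) ^ (-(1+δ)) * (x + 1)) := by
            apply mul_le_mul_of_nonneg_left hb2 (by positivity)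
        _ = C * (x+1) ^ (-(1 + δ)) * (((N+m) + 1 : ℕ) * ((N+m).factorial : ℝ)) := by
            rw [hcast1]; ring
        _ = C * (x+1) ^ (-(1 + δ)) * ↑((N + m + 1) * (N + m).factorial) := by push_cast; ring

lemma hT_tail_bound {δ : ℝ} (hδ : 0 < δ) (k : ℕ) :
    ∃ C : ℝ, 0 ≤ C ∧ ∃ N : ℕ, 1 ≤ N ∧ ∀ n, N ≤ n →
      |hT δ k ((k:ℝ)+1) n| ≤ C * (n:ℝ)^(-(1+δ)) := by
  obtain ⟨C₂, hC₂, N, hN1, hNδ, hB⟩ := coeff_decay hδ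
  have hkN : (0:ℝ) < (k:ℝ) - δ + N := by
    have : (0:ℝ) ≤ (k:ℝ) := by positivity
    linarith
  have hk1 : (0:ℝ) < (k:ℝ) + 1 := by positivity
  set C₁ : ℝ := |risingFac ((k:ℝ) - δ) N| / risingFac ((k:ℝ)+1) N with hC₁
  have hC₁0 : 0 ≤ C₁ := by
    have := risingFac_pos hk1 N
    positivity
  refine ⟨C₁ * C₂, by positivity, N, hN1, ?_⟩
  intro n hn
  obtain ⟨m, rfl⟩ := Nat.exists_eq_add_of_le hn
  have hRa : |risingFac ((k:ℝ) - δ) (N + m)| ≤ C₁ * risingFac ((k:ℝ)+1) (N + m) := by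
    rw [risingFac_add, risingFac_add, abs_mul]
    have h1 : |risingFac ((k:ℝ) - δ + N) m| = risingFac ((k:ℝ) - δ + N) m :=
      abs_of_pos (risingFac_pos hkN m)
    have h2 : risingFac ((k:ℝ) - δ + N) m ≤ risingFac ((k:ℝ) + 1 + N) m :=
      risingFac_mono hkN (by linarith) m
    have h3 : 0 < risingFac ((k:ℝ)+1) N := risingFac_pos hk1 N
    have e : C₁ * (risingFac ((k:ℝ)+1) N * risingFac ((k:ℝ)+1+N) m)
        = |risingFac ((k:ℝ) - δ) N| * risingFac ((k:ℝ)+1+N) m := by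
      rw [hC₁]; field_simp
    rw [h1, e]
    exact mul_le_mul_of_nonneg_left h2 (abs_nonneg _)
  have hRb := hB (N + m) (by omega)
  have hden : (0:ℝ) < risingFac ((k:ℝ)+1) (N + m) * ((N+m).factorial : ℝ) := by
    have := risingFac_pos hk1 (N + m)
    positivity
  have hdenabs : |risingFac ((k:ℝ)+1) (N+m) * ((N+m).factorial : ℝ)|
      = risingFac ((k:ℝ)+1) (N+m) * ((N+m).factorial : ℝ) := abs_of_pos hden
  rw [hT, abs_div, hdenabs, abs_mul, div_le_iff₀ hden]
  have hnm : (0:ℝ) < ((N+m : ℕ) : ℝ) := by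
    have : 0 < N + m := by omega
    exact_mod_cast this
  have hr : (0:ℝ) ≤ (↑(N+m) : ℝ) ^ (-(1+δ)) := Real.rpow_nonneg hnm.le _
  calc |risingFac ((k:ℝ) - δ) (N + m)| * |risingFac (-δ) (N + m)|
      ≤ (C₁ * risingFac ((k:ℝ)+1) (N + m)) * (C₂ * (↑(N+m):ℝ)^(-(1+δ)) * ((N+m).factorial : ℝ)) := by
        exact mul_le_mul hRa hRb (abs_nonneg _) (mul_nonneg hC₁0 (risingFac_pos hk1 _).le)
    _ = C₁ * C₂ * (↑(N+m):ℝ)^(-(1+δ)) * (risingFac ((k:ℝ)+1) (N+m) * ((N+m).factorial : ℝ)) := by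
        ring

section main
variable {δ : ℝ} (k : ℕ)

lemma hT_abs_le (hδ : 0 < δ) {c : ℝ} (hc : (k:ℝ)+1 ≤ c) (n : ℕ) :
    |hT δ k c n| ≤ |hT δ k ((k:ℝ)+1) n| := by
  have hk1 : (0:ℝ) < (k:ℝ)+1 := by positivity
  have hc0 : (0:ℝ) < c := lt_of_lt_of_le hk1 hc
  have h1 : 0 < risingFac ((k:ℝ)+1) n * (Nat.factorial n : ℝ) := by
    have := risingFac_pos hk1 n
    positivity
  have h2 : risingFac ((k:ℝ)+1) n * (Nat.factorial n : ℝ)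
      ≤ risingFac c n * (Nat.factorial n : ℝ) :=
    mul_le_mul_of_nonneg_right (risingFac_mono hk1 hc n) (by positivity)
  rw [hT, hT, abs_div, abs_div,
    abs_of_pos h1, abs_of_pos (lt_of_lt_of_le h1 h2)]
  exact div_le_div_of_nonneg_left (abs_nonneg _) h1 h2

lemma summable_abs_hT_base (hδ : 0 < δ) : Summable (fun n => |hT δ k ((k:ℝ)+1) n|) := by
  obtain ⟨C, hC, N, hN1, hb⟩ := hT_tail_bound hδ k
  rw [← summable_nat_add_iff N]
  have hs : Summable (fun n : ℕ => C * ((n + N : ℕ) : ℝ) ^ (-(1+δ))) := by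
    apply Summable.mul_left
    rw [summable_nat_add_iff N (f := fun n : ℕ => ((n : ℕ) : ℝ) ^ (-(1+δ)))]
    exact Real.summable_nat_rpow.mpr (by linarith)
  exact Summable.of_nonneg_of_le (fun n => abs_nonneg _)
    (fun n => hb (n + N) (by omega)) hs

lemma summable_hT (hδ : 0 < δ) {c : ℝ} (hc : (k:ℝ)+1 ≤ c) : Summable (hT δ k c) := by
  apply Summable.of_abs
  exact Summable.of_nonneg_of_le (fun n => abs_nonneg _)
    (fun n => hT_abs_le k hδ hc n) (summable_abs_hT_base k hδ)

lemma tendsto_n_hT (hδ : 0 < δ) :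
    Tendsto (fun n : ℕ => (n:ℝ) * |hT δ k ((k:ℝ)+1) n|) atTop (𝓝 0) := by
  obtain ⟨C, hC, N, hN1, hb⟩ := hT_tail_bound hδ k
  have hlim : Tendsto (fun n : ℕ => C * (n:ℝ) ^ (-δ)) atTop (𝓝 0) := by
    have h := (tendsto_rpow_neg_atTop hδ).comp tendsto_natCast_atTop_atTop (α := ℕ)
    simpa using h.const_mul C
  apply squeeze_zero' (Filter.Eventually.of_forall fun n => by positivity)
    (g := fun n : ℕ => C * (n:ℝ) ^ (-δ)) _ hlim
  filter_upwards [eventually_ge_atTop N] with n hn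
  have hn0 : (0:ℝ) < (n:ℝ) := by
    have : 0 < n := by omega
    exact_mod_cast this
  calc (n:ℝ) * |hT δ k ((k:ℝ)+1) n| ≤ (n:ℝ) * (C * (n:ℝ)^(-(1+δ))) :=
        mul_le_mul_of_nonneg_left (hb n hn) hn0.le
    _ = C * ((n:ℝ)^(1:ℝ) * (n:ℝ)^(-(1+δ))) := by rw [Real.rpow_one]; ring
    _ = C * (n:ℝ)^(-δ) := by rw [← Real.rpow_add hn0]; ring_nf
end main

lemma hT_shift_c {δ : ℝ} (k : ℕ) {c : ℝ} (hc : 0 < c) (n : ℕ) :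
    hT δ k (c+1) n = hT δ k c n * (c / (c + n)) := by
  have hcn : (0:ℝ) < c + n := by positivity
  have hcc : c * risingFac (c+1) n = risingFac c n * (c+n) := by
    rw [← risingFac_succ', risingFac_succ]
  have h1 : risingFac (c+1) n = risingFac c n * (c+n) / c := by
    field_simp [hc.ne'] at hcc ⊢
    linarith [hcc]
  rw [hT, hT, h1]
  have hr : risingFac c n ≠ 0 := (risingFac_pos hc n).ne'
  have hf : (Nat.factorial n : ℝ) ≠ 0 := by positivity
  field_simp

lemma hT_succ {δ : ℝ} (k : ℕ) {c : ℝ} (hc : 0 < c) (n : ℕ) :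
    hT δ k c (n+1) = hT δ k c n *
      ((((k:ℝ) - δ) + n) * ((-δ) + n) / ((c + n) * (n + 1))) := by
  have hcn : (0:ℝ) < c + n := by positivity
  have hr : risingFac c n ≠ 0 := (risingFac_pos hc n).ne'
  have hf : (Nat.factorial n : ℝ) ≠ 0 := by positivity
  rw [hT, hT, risingFac_succ, risingFac_succ, risingFac_succ, Nat.factorial_succ]
  push_cast
  field_simp

lemma hT_contig {δ : ℝ} (k : ℕ) {c : ℝ} (hc : 0 < c) (n : ℕ) :
    c * (c - ((k:ℝ) - δ) - (-δ)) * hT δ k c n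
      - (c - ((k:ℝ) - δ)) * (c - (-δ)) * hT δ k (c+1) n
    = c * n * hT δ k c n - c * (n+1) * hT δ k c (n+1) := by
  rw [hT_shift_c k hc, hT_succ k hc]
  have hcn : (0:ℝ) < c + n := by positivity
  have hn1 : (0:ℝ) < (n:ℝ) + 1 := by positivity
  set a : ℝ := (k:ℝ) - δ
  set b : ℝ := -δ
  set T := hT δ k c n
  have : c * (c - a - b) * T - (c - a) * (c - b) * (T * (c / (c + n)))
      = T * ((c * (c - a - b) * (c + n) - (c - a) * (c - b) * c) / (c + n)) := by
    field_simp
  rw [this]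
  have : c * n * T - c * (n+1) * (T * ((a + n) * (b + n) / ((c + n) * (n + 1))))
      = T * ((c * n * (c + n) * (n+1) - c * (n+1) * ((a + n) * (b + n))) / ((c + n) * (n+1))) := by
    field_simp
  rw [this]
  congr 1
  field_simp
  ring

noncomputable def hF (δ : ℝ) (k : ℕ) (c : ℝ) : ℝ := ∑' n, hT δ k c n

lemma hF_contig {δ : ℝ} (k : ℕ) (hδ : 0 < δ) {c : ℝ} (hc : (k:ℝ)+1 ≤ c) :
    c * (c - ((k:ℝ) - δ) - (-δ)) * hF δ k c
      = (c - ((k:ℝ) - δ)) * (c - (-δ)) * hF δ k (c+1) := by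
  have hc0 : (0:ℝ) < c := lt_of_lt_of_le (by positivity) hc
  have hc1 : (k:ℝ)+1 ≤ c + 1 := by linarith
  have hs1 := summable_hT k hδ hc
  have hs2 := summable_hT k hδ hc1
  set A : ℝ := c * (c - ((k:ℝ) - δ) - (-δ)) with hA
  set B : ℝ := (c - ((k:ℝ) - δ)) * (c - (-δ)) with hB
  have hsL : Summable (fun n => A * hT δ k c n - B * hT δ k (c+1) n) :=
    (hs1.mul_left A).sub (hs2.mul_left B)
  have htel : ∀ N : ℕ, ∑ n ∈ Finset.range N, (A * hT δ k c n - B * hT δ k (c+1) n)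
      = c * (0:ℕ) * hT δ k c 0 - c * N * hT δ k c N := by
    intro N
    have := Finset.sum_range_sub' (f := fun n : ℕ => c * n * hT δ k c n) N
    rw [← this]
    apply Finset.sum_congr rfl
    intro n _
    have h := hT_contig (δ := δ) k hc0 n
    rw [hA, hB]
    push_cast at h ⊢
    linarith [h]
  have hlim : Tendsto (fun N : ℕ => c * (0:ℕ) * hT δ k c 0 - c * N * hT δ k c N)
      atTop (𝓝 0) := by
    have h1 : Tendsto (fun N : ℕ => c * N * hT δ k c N) atTop (𝓝 0) := by
      refine squeeze_zero_norm (a := fun N : ℕ => c * ((N:ℝ) * |hT δ k ((k:ℝ)+1) N|)) ?_ ?_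
      · intro N
        rw [Real.norm_eq_abs, abs_mul, abs_mul, abs_of_pos hc0,
          abs_of_nonneg (by positivity : (0:ℝ) ≤ (N:ℝ)), mul_assoc]
        exact mul_le_mul_of_nonneg_left
          (mul_le_mul_of_nonneg_left (hT_abs_le k hδ hc N) (by positivity))
          hc0.le
      · simpa using (tendsto_n_hT k hδ).const_mul c
    simpa using h1.const_sub (c * (0:ℕ) * hT δ k c 0)
  have h0 : (∑' n, (A * hT δ k c n - B * hT δ k (c+1) n)) = 0 := by
    refine tendsto_nhds_unique hsL.hasSum.tendsto_sum_nat ?_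
    refine Tendsto.congr (fun N => (htel N).symm) ?_
    simpa using hlim
  have := Summable.tsum_sub (hs1.mul_left A) (hs2.mul_left B)
  rw [this, tsum_mul_left, tsum_mul_left] at h0
  have : A * hF δ k c - B * hF δ k (c+1) = 0 := h0
  rw [hF, hF]
  linarith [h0]

noncomputable def hQ (δ : ℝ) (k : ℕ) (m : ℕ) : ℝ :=
  risingFac (1+δ) m * risingFac ((k:ℝ)+1+δ) m / (risingFac ((k:ℝ)+1) m * risingFac (1+2*δ) m)

lemma hF_prod {δ : ℝ} (k : ℕ) (hδ : 0 < δ) (m : ℕ) :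
    hF δ k ((k:ℝ)+1) = hQ δ k m * hF δ k ((k:ℝ)+1+m) := by
  induction m with
  | zero => simp [hQ, risingFac_zero]
  | succ m ih =>
      set c : ℝ := (k:ℝ)+1+m with hc
      have hck : (k:ℝ)+1 ≤ c := by
        have : (0:ℝ) ≤ (m:ℝ) := Nat.cast_nonneg m
        rw [hc]; linarith
      have hcontig := hF_contig k hδ hck
      have h1 : (0:ℝ) < 1 + δ + m := by positivity
      have h2 : (0:ℝ) < (k:ℝ)+1+δ+m := by positivity
      have h3 : (0:ℝ) < (k:ℝ)+1+m := by positivity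
      have h4 : (0:ℝ) < 1+2*δ+m := by positivity
      have e1 : c - ((k:ℝ) - δ) = 1 + δ + m := by rw [hc]; ring
      have e2 : c - (-δ) = (k:ℝ)+1+δ+m := by rw [hc]; ring
      have e3 : c - ((k:ℝ) - δ) - (-δ) = 1+2*δ+m := by rw [hc]; ring
      rw [e3, e1, e2] at hcontig
      -- F c = (1+δ+m)((k+1+δ+m)) F (c+1) / (c (1+2δ+m))
      have hFc : hF δ k c = (1+δ+m) * ((k:ℝ)+1+δ+m) * hF δ k (c+1) / (c * (1+2*δ+m)) := by
        rw [eq_div_iff (by positivity)]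
        linarith [hcontig]
      have hcast : c + 1 = (k:ℝ)+1+(m+1 : ℕ) := by rw [hc]; push_cast; ring
      rw [ih, hFc, ← hcast]
      rw [hQ, hQ, risingFac_succ, risingFac_succ, risingFac_succ, risingFac_succ]
      have p1 := risingFac_pos (show (0:ℝ) < (k:ℝ)+1 by positivity) m
      have p2 := risingFac_pos (show (0:ℝ) < 1+2*δ by positivity) m
      rw [hc]
      field_simp

lemma hT_zero (δ : ℝ) (k : ℕ) (c : ℝ) : hT δ k c 0 = 1 := by
  simp [hT, risingFac_zero]

lemma hT_ratio {δ : ℝ} (k : ℕ) {c : ℝ} (hc : (k:ℝ)+1 ≤ c) (n : ℕ) :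
    |hT δ k c (n+1)| ≤ (((k:ℝ)+1)/c) * |hT δ k ((k:ℝ)+1) (n+1)| := by
  have hk1 : (0:ℝ) < (k:ℝ)+1 := by positivity
  have hc0 : (0:ℝ) < c := lt_of_lt_of_le hk1 hc
  have hk2 : (0:ℝ) < (k:ℝ)+1+1 := by positivity
  have hfac : (0:ℝ) < ((n+1).factorial : ℝ) := by positivity
  have hD1 : (0:ℝ) < risingFac ((k:ℝ)+1) (n+1) * ((n+1).factorial : ℝ) := by
    have := risingFac_pos hk1 (n+1); positivity
  have hDc : (0:ℝ) < risingFac c (n+1) * ((n+1).factorial : ℝ) := by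
    have := risingFac_pos hc0 (n+1); positivity
  have hge : (c/((k:ℝ)+1)) * (risingFac ((k:ℝ)+1) (n+1) * ((n+1).factorial : ℝ))
      ≤ risingFac c (n+1) * ((n+1).factorial : ℝ) := by
    have hmono : risingFac ((k:ℝ)+1+1) n ≤ risingFac (c+1) n :=
      risingFac_mono hk2 (by linarith) n
    rw [risingFac_succ' c, risingFac_succ' ((k:ℝ)+1)]
    have : (c/((k:ℝ)+1)) * (((k:ℝ)+1) * risingFac ((k:ℝ)+1+1) n)
        = c * risingFac ((k:ℝ)+1+1) n := by field_simp
    rw [← mul_assoc, this, mul_assoc, mul_assoc]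
    exact mul_le_mul_of_nonneg_left
      (mul_le_mul_of_nonneg_right hmono hfac.le) hc0.le
  rw [hT, hT, abs_div, abs_div, abs_of_pos hD1, abs_of_pos hDc]
  calc |risingFac ((k:ℝ)-δ) (n+1) * risingFac (-δ) (n+1)| / (risingFac c (n+1) * ((n+1).factorial : ℝ))
      ≤ |risingFac ((k:ℝ)-δ) (n+1) * risingFac (-δ) (n+1)| /
          ((c/((k:ℝ)+1)) * (risingFac ((k:ℝ)+1) (n+1) * ((n+1).factorial : ℝ))) :=
        div_le_div_of_nonneg_left (abs_nonneg _) (by positivity) hge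
    _ = (((k:ℝ)+1)/c) * (|risingFac ((k:ℝ)-δ) (n+1) * risingFac (-δ) (n+1)| /
          (risingFac ((k:ℝ)+1) (n+1) * ((n+1).factorial : ℝ))) := by
        field_simp

lemma tendsto_hF {δ : ℝ} (k : ℕ) (hδ : 0 < δ) :
    Tendsto (fun m : ℕ => hF δ k ((k:ℝ)+1+m)) atTop (𝓝 1) := by
  have hk1 : (0:ℝ) < (k:ℝ)+1 := by positivity
  set M : ℝ := ∑' n, |hT δ k ((k:ℝ)+1) (n+1)| with hM
  have hMsum : Summable (fun n => |hT δ k ((k:ℝ)+1) (n+1)|) := by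
    have := summable_abs_hT_base k hδ
    exact (summable_nat_add_iff (f := fun n => |hT δ k ((k:ℝ)+1) n|) 1).mpr this
  have hM0 : 0 ≤ M := tsum_nonneg (fun n => abs_nonneg _)
  have key : ∀ m : ℕ, |hF δ k ((k:ℝ)+1+m) - 1| ≤ (((k:ℝ)+1)/((k:ℝ)+1+m)) * M := by
    intro m
    have hm0 : (0:ℝ) ≤ (m:ℝ) := Nat.cast_nonneg m
    have hc : (k:ℝ)+1 ≤ (k:ℝ)+1+m := by linarith
    have hc0 : (0:ℝ) < (k:ℝ)+1+m := by linarith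
    have hsum := summable_hT k hδ hc
    have hsplit : hF δ k ((k:ℝ)+1+m)
        = hT δ k ((k:ℝ)+1+m) 0 + ∑' n, hT δ k ((k:ℝ)+1+m) (n+1) := by
      rw [hF]
      exact Summable.tsum_eq_zero_add hsum
    rw [hsplit, hT_zero, add_sub_cancel_left]
    have habs : |∑' n, hT δ k ((k:ℝ)+1+m) (n+1)| ≤ ∑' n, |hT δ k ((k:ℝ)+1+m) (n+1)| := by
      simpa [Real.norm_eq_abs] using
        norm_tsum_le_tsum_norm (f := fun n => hT δ k ((k:ℝ)+1+m) (n+1))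
          (by simpa [Real.norm_eq_abs] using
            ((summable_nat_add_iff 1).mpr (summable_hT k hδ hc)).abs)
    refine le_trans habs ?_
    have hle := Summable.tsum_le_tsum (fun n => hT_ratio k hc n)
      (by
        have := ((summable_nat_add_iff 1).mpr (summable_hT k hδ hc)).abs
        exact this)
      (hMsum.mul_left (((k:ℝ)+1)/((k:ℝ)+1+m)))
    rw [tsum_mul_left] at hle
    exact hle
  have hlim : Tendsto (fun m : ℕ => (k:ℝ)+1+m) atTop atTop :=
    tendsto_atTop_add_const_left atTop ((k:ℝ)+1) tendsto_natCast_atTop_atTop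
  have h2 : Tendsto (fun m : ℕ => (((k:ℝ)+1)/((k:ℝ)+1+m)) * M) atTop (𝓝 0) := by
    have h3 : Tendsto (fun m : ℕ => (((k:ℝ)+1) * M) * ((k:ℝ)+1+m)⁻¹) atTop (𝓝 0) := by
      simpa using hlim.inv_tendsto_atTop.const_mul (((k:ℝ)+1) * M)
    refine h3.congr (fun m => ?_)
    rw [div_mul_eq_mul_div, div_eq_mul_inv]
  rw [tendsto_iff_norm_sub_tendsto_zero]
  refine squeeze_zero_norm ?_ h2
  intro m
  simpa [Real.norm_eq_abs, abs_abs] using key m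

lemma gammaSeq_eq (s : ℝ) (n : ℕ) :
    Real.GammaSeq s n = (n:ℝ)^s * (Nat.factorial n : ℝ) / risingFac s (n+1) := rfl

lemma hQ_limit {δ : ℝ} (hδ : 0 < δ) (k : ℕ) :
    Tendsto (hQ δ k) atTop (𝓝 (Gamma ((k:ℝ)+1) * Gamma (1+2*δ)
      / (Gamma (1+δ) * Gamma ((k:ℝ)+1+δ)))) := by
  have hp1 : (0:ℝ) < 1+δ := by linarith
  have hp2 : (0:ℝ) < (k:ℝ)+1+δ := by positivity
  have hp3 : (0:ℝ) < (k:ℝ)+1 := by positivity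
  have hp4 : (0:ℝ) < 1+2*δ := by linarith
  have hg : Tendsto (fun n => Real.GammaSeq ((k:ℝ)+1) n * Real.GammaSeq (1+2*δ) n
      / (Real.GammaSeq (1+δ) n * Real.GammaSeq ((k:ℝ)+1+δ) n)) atTop
      (𝓝 (Gamma ((k:ℝ)+1) * Gamma (1+2*δ) / (Gamma (1+δ) * Gamma ((k:ℝ)+1+δ)))) := by
    refine Tendsto.div
      ((Real.GammaSeq_tendsto_Gamma _).mul (Real.GammaSeq_tendsto_Gamma _))
      ((Real.GammaSeq_tendsto_Gamma _).mul (Real.GammaSeq_tendsto_Gamma _)) ?_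
    have g1 := Real.Gamma_pos_of_pos hp1
    have g2 := Real.Gamma_pos_of_pos hp2
    positivity
  have heq : ∀ᶠ n in atTop, Real.GammaSeq ((k:ℝ)+1) n * Real.GammaSeq (1+2*δ) n
      / (Real.GammaSeq (1+δ) n * Real.GammaSeq ((k:ℝ)+1+δ) n) = hQ δ k (n+1) := by
    filter_upwards [eventually_ge_atTop 1] with n hn
    have hn0 : (0:ℝ) < (n:ℝ) := by exact_mod_cast hn
    have hx : (n:ℝ)^((k:ℝ)+1) * (n:ℝ)^(1+2*δ) = (n:ℝ)^(1+δ) * (n:ℝ)^((k:ℝ)+1+δ) := by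
      rw [← Real.rpow_add hn0, ← Real.rpow_add hn0]
      ring_nf
    have q1 := risingFac_pos hp1 (n+1)
    have q2 := risingFac_pos hp2 (n+1)
    have q3 := risingFac_pos hp3 (n+1)
    have q4 := risingFac_pos hp4 (n+1)
    have r1 : (0:ℝ) < (n:ℝ)^((k:ℝ)+1) := Real.rpow_pos_of_pos hn0 _
    have r2 : (0:ℝ) < (n:ℝ)^(1+2*δ) := Real.rpow_pos_of_pos hn0 _
    have r3 : (0:ℝ) < (n:ℝ)^(1+δ) := Real.rpow_pos_of_pos hn0 _
    have r4 : (0:ℝ) < (n:ℝ)^((k:ℝ)+1+δ) := Real.rpow_pos_of_pos hn0 _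
    have hf : (0:ℝ) < (Nat.factorial n : ℝ) := by positivity
    rw [hQ, gammaSeq_eq, gammaSeq_eq, gammaSeq_eq, gammaSeq_eq]
    rw [div_mul_div_comm, div_mul_div_comm, div_div_div_eq]
    rw [div_eq_div_iff (by positivity) (by positivity)]
    linear_combination ((Nat.factorial n : ℝ)^2 * risingFac (1+δ) (n+1) *
      risingFac ((k:ℝ)+1+δ) (n+1) * risingFac ((k:ℝ)+1) (n+1) *
      risingFac (1+2*δ) (n+1)) * hx
  have := hg.congr' heq
  exact (tendsto_add_atTop_iff_nat 1).mp this

theorem stmt2 (δ : ℝ) (hδ : 0 < δ) (k : ℕ) :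
    ∑' n : ℕ,
        risingFac (-δ) (n + k) * risingFac (-δ) n / ((Nat.factorial (n + k)) * (Nat.factorial n))
      = risingFac (-δ) k * Real.Gamma (1 + 2 * δ)
          / (Real.Gamma (1 + δ) * Real.Gamma (1 + δ + k)) := by
  have hk1 : (0:ℝ) < (k:ℝ)+1 := by positivity
  have hfk : (0:ℝ) < (Nat.factorial k : ℝ) := by positivity
  have hfe : hF δ k ((k:ℝ)+1)
      = Gamma ((k:ℝ)+1) * Gamma (1+2*δ) / (Gamma (1+δ) * Gamma ((k:ℝ)+1+δ)) := by
    have h1 : Tendsto (fun m : ℕ => hQ δ k m * hF δ k ((k:ℝ)+1+m)) atTop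
        (𝓝 (Gamma ((k:ℝ)+1) * Gamma (1+2*δ) / (Gamma (1+δ) * Gamma ((k:ℝ)+1+δ)) * 1)) :=
      (hQ_limit hδ k).mul (tendsto_hF k hδ)
    have h2 : (fun m : ℕ => hQ δ k m * hF δ k ((k:ℝ)+1+m))
        = fun _ : ℕ => hF δ k ((k:ℝ)+1) :=
      funext fun m => (hF_prod k hδ m).symm
    rw [h2, mul_one] at h1
    exact tendsto_nhds_unique tendsto_const_nhds h1
  have hterm : ∀ n : ℕ, risingFac (-δ) (n + k) * risingFac (-δ) n
      / ((Nat.factorial (n + k) : ℝ) * (Nat.factorial n : ℝ))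
      = risingFac (-δ) k / (Nat.factorial k : ℝ) * hT δ k ((k:ℝ)+1) n := by
    intro n
    have e1 : risingFac (-δ) (n + k) = risingFac (-δ) k * risingFac ((k:ℝ) - δ) n := by
      rw [add_comm n k, risingFac_add]
      congr 2
      ring
    have e2 : ((Nat.factorial (n + k) : ℝ)) = (Nat.factorial k : ℝ) * risingFac ((k:ℝ)+1) n :=
      factorial_cast_eq k n
    rw [e1, e2, hT]
    have hrp := risingFac_pos hk1 n
    have hfn : (0:ℝ) < (Nat.factorial n : ℝ) := by positivity
    field_simp
  have h3 : (∑' n : ℕ, risingFac (-δ) (n + k) * risingFac (-δ) n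
        / ((Nat.factorial (n + k) : ℝ) * (Nat.factorial n : ℝ)))
      = ∑' n : ℕ, risingFac (-δ) k / (Nat.factorial k : ℝ) * hT δ k ((k:ℝ)+1) n :=
    tsum_congr hterm
  rw [h3, tsum_mul_left]
  have : (∑' n, hT δ k ((k:ℝ)+1) n) = hF δ k ((k:ℝ)+1) := rfl
  rw [this, hfe, Real.Gamma_nat_eq_factorial]
  have g1 : Gamma (1+δ) ≠ 0 := (Real.Gamma_pos_of_pos (by linarith)).ne'
  have g2 : Gamma ((k:ℝ)+1+δ) ≠ 0 := (Real.Gamma_pos_of_pos (by positivity)).ne'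
  have e4 : (1 + δ + (k:ℕ) : ℝ) = (k:ℝ)+1+δ := by push_cast; ring
  rw [e4]
  field_simp
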